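/- For p ∈ (0,1], consider the functions t_{p,k}(t) = (k^{k-2}/k!)·(2t)^{k-1}·(1-g_p(t))^k·exp(-2kt(1-g_p(t))) for k ≥ 1, where g_p is the gel mass function (the inverse of f_p on [1/2,∞), extended by 0 on [0,1/2]). Then for every t ≥ 0 and every k ≥ 2: t_{p,k}'(t) = Σ_{i+j=k, i,j≥1} i·j·t_{p,i}(t)·t_{p,j}(t) - 2k·t_{p,k}(t)·(1 - (1-p)·g_p(t)), and t_{p,1}'(t) = -2·t_{p,1}(t)·(1-(1-p)g_p(t)), with t_{p,1}(0)=1 and t_{p,k}(0)=0 for k ≥ 2. -/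

import Mathlib

open Real Set Finset fwdDiff

section AuxTree

lemma fwdDiff_pow_eq_zero : ∀ (n m : ℕ), m < n → Δ_[(1:ℝ)] ^[n] (fun y : ℝ => y ^ m) = 0 := by
  intro n
  induction n with
  | zero => intro m hm; omega
  | succ n ih =>
    intro m hm
    have hΔ : Δ_[(1:ℝ)] (fun y : ℝ => y ^ m)
        = ∑ j ∈ Finset.range m, ((m.choose j : ℝ) • fun y : ℝ => y ^ j) := by
      funext y
      simp only [fwdDiff, Finset.sum_apply, Pi.smul_apply, smul_eq_mul]
      rw [add_pow]
      rw [Finset.sum_range_succ]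
      simp [mul_comm]
    rw [Function.iterate_succ_apply, hΔ, fwdDiff_iter_finset_sum]
    apply Finset.sum_eq_zero
    intro j hj
    rw [fwdDiff_iter_const_smul, ih j (lt_of_lt_of_le (Finset.mem_range.mp hj) (by omega)), smul_zero]

lemma findiff (n m : ℕ) (hm : m < n) (x : ℝ) :
    ∑ i ∈ Finset.range (n+1), (-1:ℝ)^(n-i) * (n.choose i) * (x + i)^m = 0 := by
  have h := fwdDiff_iter_eq_sum_shift (1:ℝ) (fun y : ℝ => y ^ m) n x
  rw [fwdDiff_pow_eq_zero n m hm] at h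
  simp only [Pi.zero_apply, smul_eq_mul, nsmul_eq_mul, mul_one, zsmul_eq_mul] at h
  push_cast at h
  rw [← h]




lemma abel1 : ∀ (n : ℕ) (x y : ℝ),
    (y + (n:ℝ)) ^ n + ∑ i ∈ Finset.Icc 1 n,
      (n.choose i : ℝ) * x * (x + (i:ℝ)) ^ (i - 1) * (y + ((n - i : ℕ) : ℝ)) ^ (n - i)
      = (x + y + (n:ℝ)) ^ n := by
  intro n
  induction n with
  | zero => intro x y; simp
  | succ n ih =>
    intro x y
    -- the function of w whose constancy we establish
    set c : ℝ := ((n+1 : ℕ) : ℝ) with hc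
    set F : ℝ → ℝ := fun w => (w + c) ^ (n+1) + (∑ i ∈ Finset.Icc 1 (n+1),
        ((n+1).choose i : ℝ) * x * (x + (i:ℝ)) ^ (i - 1) * (w + (((n+1) - i : ℕ) : ℝ)) ^ ((n+1) - i))
        - (x + w + c) ^ (n+1) with hF
    have hder : ∀ z : ℝ, HasDerivAt F 0 z := by
      intro z
      have h1 : HasDerivAt (fun w : ℝ => (w + c) ^ (n+1))
          (((n+1 : ℕ):ℝ) * (z + c) ^ (n+1-1) * 1) z :=
        ((hasDerivAt_id z).add_const c).pow (n+1)
      have h2 : HasDerivAt (fun w : ℝ => ∑ i ∈ Finset.Icc 1 (n+1),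
          ((n+1).choose i : ℝ) * x * (x + (i:ℝ)) ^ (i - 1) * (w + (((n+1) - i : ℕ) : ℝ)) ^ ((n+1) - i))
          (∑ i ∈ Finset.Icc 1 (n+1), ((n+1).choose i : ℝ) * x * (x + (i:ℝ)) ^ (i - 1) *
            (((((n+1) - i : ℕ)):ℝ) * (z + (((n+1) - i : ℕ) : ℝ)) ^ ((n+1) - i - 1) * 1)) z := by
        apply HasDerivAt.fun_sum
        intro i _
        exact (((hasDerivAt_id z).add_const (((n+1) - i : ℕ) : ℝ)).pow ((n+1) - i)).const_mul _
      have h3 : HasDerivAt (fun w : ℝ => (x + w + c) ^ (n+1))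
          (((n+1 : ℕ):ℝ) * (x + z + c) ^ (n+1-1) * 1) z :=
        (((hasDerivAt_id z).const_add x).add_const c).pow (n+1)
      have comb := (h1.add h2).sub h3
      have hval : ((n+1 : ℕ):ℝ) * (z + c) ^ (n+1-1) * 1 + (∑ i ∈ Finset.Icc 1 (n+1),
          ((n+1).choose i : ℝ) * x * (x + (i:ℝ)) ^ (i - 1) *
            (((((n+1) - i : ℕ)):ℝ) * (z + (((n+1) - i : ℕ) : ℝ)) ^ ((n+1) - i - 1) * 1))
          - ((n+1 : ℕ):ℝ) * (x + z + c) ^ (n+1-1) * 1 = 0 := by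
        have hsum2 : (∑ i ∈ Finset.Icc 1 (n+1),
            ((n+1).choose i : ℝ) * x * (x + (i:ℝ)) ^ (i - 1) *
              (((((n+1) - i : ℕ)):ℝ) * (z + (((n+1) - i : ℕ) : ℝ)) ^ ((n+1) - i - 1) * 1))
            = ((n:ℝ)+1) * ∑ i ∈ Finset.Icc 1 n,
              (n.choose i : ℝ) * x * (x + (i:ℝ)) ^ (i - 1) * ((z+1) + ((n - i : ℕ) : ℝ)) ^ (n - i) := by
          rw [Finset.sum_Icc_succ_top (by omega : 1 ≤ n+1), Finset.mul_sum]
          simp only [Nat.sub_self, Nat.cast_zero, zero_mul, mul_zero, zero_pow, add_zero, mul_one]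
          apply Finset.sum_congr rfl
          intro i hi
          obtain ⟨h1i, h2i⟩ := Finset.mem_Icc.mp hi
          have e1 : (n+1) - i - 1 = n - i := by omega
          have e2 : ((n+1) - i : ℕ) = (n - i) + 1 := by omega
          rw [e1, e2]
          have hccN : (n+1).choose i * ((n - i) + 1) = (n+1) * n.choose i := by
            have h1' : (n+1) * n.choose (n - i) = (n+1).choose ((n-i)+1) * ((n-i)+1) := by
              simpa using Nat.add_one_mul_choose_eq n (n - i)
            calc (n+1).choose i * ((n - i) + 1)
                = (n+1).choose ((n+1) - i) * ((n - i) + 1) := by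
                  rw [Nat.choose_symm (by omega : i ≤ n+1)]
              _ = (n+1).choose ((n - i) + 1) * ((n - i) + 1) := by
                  rw [show (n+1) - i = (n - i) + 1 from by omega]
              _ = (n+1) * n.choose (n - i) := h1'.symm
              _ = (n+1) * n.choose i := by rw [Nat.choose_symm h2i]
          have hcc : (((n+1).choose i : ℕ) : ℝ) * (((n - i : ℕ):ℝ) + 1) = ((n:ℝ)+1) * (n.choose i : ℝ) := by
            exact_mod_cast hccN
          push_cast [Nat.cast_sub h2i] at hcc ⊢
          linear_combination (x * (x + (i:ℝ)) ^ (i - 1) * ((z+1) + (((n:ℝ)) - (i:ℝ))) ^ (n - i)) * hcc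
        rw [hsum2]
        have hih := ih x (z+1)
        simp only [hc]
        push_cast
        linear_combination ((n:ℝ)+1) * hih
      exact hval ▸ comb
    have hcF : ∀ a b : ℝ, F a = F b :=
      fun a b => is_const_of_deriv_eq_zero (fun z => (hder z).differentiableAt)
        (fun z => (hder z).deriv) a b
    have hzero : F (-x - c) = 0 := by
      have hfd := findiff (n+1) n (by omega) x
      simp only [hF]
      rw [← Finset.Ico_add_one_right_eq_Icc, Finset.sum_Ico_eq_sum_range]
      rw [show n + 1 + 1 - 1 = n + 1 from by omega]
      have hterm : ∀ i ∈ Finset.range (n+1),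
          ((n+1).choose (1+i) : ℝ) * x * (x + ((1+i:ℕ):ℝ)) ^ ((1+i) - 1) *
            ((-x - c) + (((n+1) - (1+i) : ℕ) : ℝ)) ^ ((n+1) - (1+i))
          = x * ((-1:ℝ)^(n+1-(i+1)) * ((n+1).choose (i+1)) * (x + ((i+1:ℕ):ℝ))^n) := by
        intro i hi
        have hi' : i ≤ n := Nat.lt_succ_iff.mp (Finset.mem_range.mp hi)
        rw [show 1+i = i+1 from by omega]
        rw [show (i+1) - 1 = i from by omega]
        rw [show (n+1) - (i+1) = n - i from by omega]
        have e3 : (-x - c + ((n - i : ℕ) : ℝ)) = -(x + ((i+1:ℕ):ℝ)) := by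
          rw [hc]; push_cast [Nat.cast_sub hi']; ring
        rw [e3, neg_pow]
        have e4 : (x + ((i+1:ℕ):ℝ)) ^ i * (x + ((i+1:ℕ):ℝ)) ^ (n - i) = (x + ((i+1:ℕ):ℝ)) ^ n := by
          rw [← pow_add]; congr 1; omega
        linear_combination (((n+1).choose (i+1) : ℝ) * x * (-1:ℝ)^(n-i)) * e4
      rw [Finset.sum_congr rfl hterm, ← Finset.mul_sum]
      rw [Finset.sum_range_succ'] at hfd
      rw [show -x - c + c = -x from by ring, show x + (-x - c) + c = 0 from by ring,
        zero_pow (Nat.succ_ne_zero n), neg_pow]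
      simp only [Nat.sub_zero, Nat.choose_zero_right, Nat.cast_one, Nat.cast_zero, add_zero,
        mul_one, one_mul] at hfd
      linear_combination x * hfd
    have := (hcF y (-x - c)).trans hzero
    rw [hF] at this
    simpa [sub_eq_zero] using this

lemma choose_aux (n i : ℕ) (h2i : i ≤ n) :
    (n+1).choose i * ((n - i) + 1) = (n+1) * n.choose i := by
  have h1' : (n+1) * n.choose (n - i) = (n+1).choose ((n-i)+1) * ((n-i)+1) := by
    simpa using Nat.add_one_mul_choose_eq n (n - i)
  calc (n+1).choose i * ((n - i) + 1)
      = (n+1).choose ((n+1) - i) * ((n - i) + 1) := by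
        rw [Nat.choose_symm (by omega : i ≤ n+1)]
    _ = (n+1).choose ((n - i) + 1) * ((n - i) + 1) := by
        rw [show (n+1) - i = (n - i) + 1 from by omega]
    _ = (n+1) * n.choose (n - i) := h1'.symm
    _ = (n+1) * n.choose i := by rw [Nat.choose_symm h2i]

lemma abel2 (m : ℕ) (x y : ℝ) :
    ∑ i ∈ Finset.Icc 1 m, ((m+1).choose i : ℝ) * x * (x+(i:ℝ))^(i-1) * y * (y + (((m+1)-i : ℕ):ℝ))^((m+1)-i-1)
    = (x+y+((m+1:ℕ):ℝ))^(m+1) - (y+((m+1:ℕ):ℝ))^(m+1) - x*(x+((m+1:ℕ):ℝ))^m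
      - ((m+1:ℕ):ℝ)*(x+y+((m+1:ℕ):ℝ))^m + ((m+1:ℕ):ℝ)*(y+((m+1:ℕ):ℝ))^m := by
  have H1 := abel1 (m+1) x y
  rw [Finset.sum_Icc_succ_top (by omega : 1 ≤ m+1)] at H1
  have hsplit : ∀ i ∈ Finset.Icc 1 m,
      ((m+1).choose i : ℝ) * x * (x + (i:ℝ)) ^ (i - 1) * (y + (((m+1) - i : ℕ) : ℝ)) ^ ((m+1) - i)
      = ((m+1).choose i : ℝ) * x * (x+(i:ℝ))^(i-1) * y * (y + (((m+1)-i : ℕ):ℝ))^((m+1)-i-1)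
        + ((m:ℝ)+1) * ((m.choose i : ℝ) * x * (x + (i:ℝ)) ^ (i - 1) * ((y+1) + ((m - i : ℕ) : ℝ)) ^ (m - i)) := by
    intro i hi
    obtain ⟨h1i, h2i⟩ := Finset.mem_Icc.mp hi
    rw [show (m+1) - i = (m-i)+1 from by omega]
    rw [show (m-i)+1-1 = m-i from by omega]
    have hcc : (((m+1).choose i : ℕ) : ℝ) * (((m - i : ℕ):ℝ) + 1) = ((m:ℝ)+1) * (m.choose i : ℝ) := by
      exact_mod_cast choose_aux m i h2i
    push_cast [Nat.cast_sub h2i] at hcc ⊢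
    linear_combination (x * (x + (i:ℝ)) ^ (i - 1) * (y + ((m:ℝ) - (i:ℝ)) + 1) ^ (m - i)) * hcc
  rw [Finset.sum_congr rfl hsplit, Finset.sum_add_distrib, ← Finset.mul_sum] at H1
  have H2 := abel1 m x (y+1)
  simp only [Nat.choose_self, Nat.cast_one, one_mul, Nat.sub_self, pow_zero, mul_one,
    Nat.cast_zero] at H1
  push_cast at H1 ⊢
  linear_combination H1 - ((m:ℝ)+1) * H2

lemma abelS (m : ℕ) :
    ∑ i ∈ Finset.Icc 1 m, (((m+1).choose i : ℕ) : ℝ) * ((i:ℝ))^(i-1) * ((((m+1)-i : ℕ)):ℝ)^((m+1)-i-1)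
    = 2 * (m:ℝ) * (((m+1:ℕ)):ℝ)^(m-1) := by
  set c : ℝ := ((m+1:ℕ):ℝ) with hc
  have step1 : ∀ x : ℝ,
      ∑ i ∈ Finset.Icc 1 m, (((m+1).choose i : ℕ) : ℝ) * x * (x+(i:ℝ))^(i-1) * ((((m+1)-i : ℕ)):ℝ)^((m+1)-i-1)
      = ((m:ℝ)+1)*(x+c)^m - ((m:ℝ)+1)*c^m - c*(m:ℝ)*(x+c)^(m-1) + c*(m:ℝ)*c^(m-1) := by
    intro x
    have d1 : HasDerivAt (fun y : ℝ => ∑ i ∈ Finset.Icc 1 m,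
        ((m+1).choose i : ℝ) * x * (x+(i:ℝ))^(i-1) * y * (y + (((m+1)-i : ℕ):ℝ))^((m+1)-i-1))
        (∑ i ∈ Finset.Icc 1 m,
          (((m+1).choose i : ℝ) * x * (x+(i:ℝ))^(i-1) * 1 * ((0:ℝ) + (((m+1)-i : ℕ):ℝ))^((m+1)-i-1)
           + (((m+1).choose i : ℝ) * x * (x+(i:ℝ))^(i-1) * 0) *
             ((((m+1)-i-1 : ℕ)):ℝ) * ((0:ℝ) + (((m+1)-i : ℕ):ℝ))^((m+1)-i-1-1) * 1)) 0 := by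
      apply HasDerivAt.fun_sum
      intro i _
      have hu : HasDerivAt (fun y : ℝ => ((m+1).choose i : ℝ) * x * (x+(i:ℝ))^(i-1) * y)
          (((m+1).choose i : ℝ) * x * (x+(i:ℝ))^(i-1) * 1) 0 :=
        (hasDerivAt_id 0).const_mul _
      have hv : HasDerivAt (fun y : ℝ => (y + (((m+1)-i : ℕ):ℝ))^((m+1)-i-1))
          (((((m+1)-i-1 : ℕ)):ℝ) * ((0:ℝ) + (((m+1)-i : ℕ):ℝ))^((m+1)-i-1-1) * 1) 0 :=
        ((hasDerivAt_id 0).add_const _).pow _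
      simpa [mul_assoc] using hu.fun_mul hv
    have d2 : HasDerivAt (fun y : ℝ => (x+y+c)^(m+1) - (y+c)^(m+1) - x*(x+c)^m
        - c*(x+y+c)^m + c*(y+c)^m)
        ((((m+1:ℕ)):ℝ) * (x+0+c)^(m+1-1) * 1 - (((m+1:ℕ)):ℝ) * ((0:ℝ)+c)^(m+1-1) * 1 - 0
          - c * (((m:ℕ)):ℝ) * (x+0+c)^(m-1) * 1 + c * (((m:ℕ)):ℝ) * ((0:ℝ)+c)^(m-1) * 1) 0 := by
      have hA : HasDerivAt (fun y : ℝ => (x+y+c)^(m+1))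
          ((((m+1:ℕ)):ℝ) * (x+0+c)^(m+1-1) * 1) 0 :=
        (((hasDerivAt_id 0).const_add x).add_const c).pow (m+1)
      have hB : HasDerivAt (fun y : ℝ => (y+c)^(m+1))
          ((((m+1:ℕ)):ℝ) * ((0:ℝ)+c)^(m+1-1) * 1) 0 :=
        ((hasDerivAt_id 0).add_const c).pow (m+1)
      have hC : HasDerivAt (fun _ : ℝ => x*(x+c)^m) 0 0 := hasDerivAt_const 0 _
      have hD : HasDerivAt (fun y : ℝ => c*(x+y+c)^m)
          (c * ((((m:ℕ)):ℝ) * (x+0+c)^(m-1) * 1)) 0 :=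
        ((((hasDerivAt_id 0).const_add x).add_const c).pow m).const_mul c
      have hE : HasDerivAt (fun y : ℝ => c*(y+c)^m)
          (c * ((((m:ℕ)):ℝ) * ((0:ℝ)+c)^(m-1) * 1)) 0 :=
        (((hasDerivAt_id 0).add_const c).pow m).const_mul c
      have := ((((hA.sub hB).sub hC).sub hD).add hE)
      refine this.congr_deriv (Eq.symm ?_)
      ring
    have heq : (fun y : ℝ => ∑ i ∈ Finset.Icc 1 m,
        ((m+1).choose i : ℝ) * x * (x+(i:ℝ))^(i-1) * y * (y + (((m+1)-i : ℕ):ℝ))^((m+1)-i-1))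
        = (fun y : ℝ => (x+y+c)^(m+1) - (y+c)^(m+1) - x*(x+c)^m - c*(x+y+c)^m + c*(y+c)^m) := by
      funext y
      rw [abel2 m x y]
    rw [heq] at d1
    have hV := d1.unique d2
    simp only [mul_one, mul_zero, zero_mul, add_zero, zero_add, sub_zero] at hV
    rw [show m+1-1 = m from by omega] at hV
    push_cast at hV ⊢
    linear_combination hV
  -- differentiate step1 in x at 0
  have d1 : HasDerivAt (fun x : ℝ => ∑ i ∈ Finset.Icc 1 m,
      ((m+1).choose i : ℝ) * x * (x+(i:ℝ))^(i-1) * ((((m+1)-i : ℕ)):ℝ)^((m+1)-i-1))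
      (∑ i ∈ Finset.Icc 1 m,
        ((((m+1).choose i : ℝ) * 1) * ((0:ℝ)+(i:ℝ))^(i-1)
          + (((m+1).choose i : ℝ) * 0) * ((((i-1 : ℕ)):ℝ) * ((0:ℝ)+(i:ℝ))^(i-1-1) * 1))
          * ((((m+1)-i : ℕ)):ℝ)^((m+1)-i-1)) 0 := by
    apply HasDerivAt.fun_sum
    intro i _
    exact ((((hasDerivAt_id 0).const_mul _).mul
      (((hasDerivAt_id 0).add_const _).pow _)).mul_const _)
  have d2 : HasDerivAt (fun x : ℝ => ((m:ℝ)+1)*(x+c)^m - ((m:ℝ)+1)*c^m - c*(m:ℝ)*(x+c)^(m-1)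
      + c*(m:ℝ)*c^(m-1))
      (((m:ℝ)+1) * ((((m:ℕ)):ℝ) * ((0:ℝ)+c)^(m-1) * 1)
        - c*(m:ℝ) * ((((m-1:ℕ)):ℝ) * ((0:ℝ)+c)^(m-1-1) * 1)) 0 := by
    have hA : HasDerivAt (fun x : ℝ => ((m:ℝ)+1)*(x+c)^m)
        (((m:ℝ)+1) * ((((m:ℕ)):ℝ) * ((0:ℝ)+c)^(m-1) * 1)) 0 :=
      (((hasDerivAt_id 0).add_const c).pow m).const_mul _
    have hB : HasDerivAt (fun _ : ℝ => ((m:ℝ)+1)*c^m) 0 0 := hasDerivAt_const 0 _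
    have hC : HasDerivAt (fun x : ℝ => c*(m:ℝ)*(x+c)^(m-1))
        (c*(m:ℝ) * ((((m-1:ℕ)):ℝ) * ((0:ℝ)+c)^(m-1-1) * 1)) 0 :=
      (((hasDerivAt_id 0).add_const c).pow (m-1)).const_mul _
    have hD : HasDerivAt (fun _ : ℝ => c*(m:ℝ)*c^(m-1)) 0 0 := hasDerivAt_const 0 _
    have := (((hA.sub hB).sub hC).add hD)
    refine this.congr_deriv (Eq.symm ?_)
    ring
  have heq : (fun x : ℝ => ∑ i ∈ Finset.Icc 1 m,
      ((m+1).choose i : ℝ) * x * (x+(i:ℝ))^(i-1) * ((((m+1)-i : ℕ)):ℝ)^((m+1)-i-1))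
      = (fun x : ℝ => ((m:ℝ)+1)*(x+c)^m - ((m:ℝ)+1)*c^m - c*(m:ℝ)*(x+c)^(m-1)
        + c*(m:ℝ)*c^(m-1)) := by
    funext x
    exact step1 x
  rw [heq] at d1
  have hV := d1.unique d2
  simp only [mul_one, mul_zero, zero_mul, add_zero, zero_add] at hV
  rw [hV]
  -- final arithmetic
  rcases m with _ | m
  · norm_num
  · rcases m with _ | m
    · norm_num
    · simp only [show m+1+1-1 = m+1 from by omega, show (m+1)-1 = m from by omega, hc]
      push_cast
      ring


lemma cross_neg {h : ℝ → ℝ} {s d : ℝ} (hd : HasDerivAt h d s) (hneg : d < 0) (hs : h s = 0) :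
    ∃ ε > 0, (∀ y, s - ε < y → y < s → 0 < h y) ∧ (∀ y, s < y → y < s + ε → h y < 0) := by
  have hslope := hasDerivAt_iff_tendsto_slope.mp hd
  have hev : ∀ᶠ y in nhdsWithin s {s}ᶜ, slope h s y < 0 :=
    hslope.eventually_lt_const hneg
  rw [eventually_nhdsWithin_iff] at hev
  obtain ⟨ε, hε, hball⟩ := Metric.eventually_nhds_iff.mp hev
  refine ⟨ε, hε, ?_, ?_⟩
  · intro y h1 h2
    have hy : slope h s y < 0 := by
      apply hball (by rw [Real.dist_eq]; rw [abs_lt]; constructor <;> linarith)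
      simp [ne_of_lt h2]
    rw [slope_def_field, hs] at hy
    have hyd : y - s < 0 := by linarith
    have := div_neg_iff.mp hy
    rcases this with ⟨h3, h4⟩ | ⟨h3, h4⟩
    · linarith [h4, hyd]
    · linarith [h3]
  · intro y h1 h2
    have hy : slope h s y < 0 := by
      apply hball (by rw [Real.dist_eq]; rw [abs_lt]; constructor <;> linarith)
      simp [(ne_of_gt h1)]
    rw [slope_def_field, hs] at hy
    have hyd : 0 < y - s := by linarith
    have := div_neg_iff.mp hy
    rcases this with ⟨h3, h4⟩ | ⟨h3, h4⟩
    · linarith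
    · linarith

set_option maxHeartbeats 1000000 in
lemma denom_ne (p : ℝ) (hp0 : 0 < p) (gp : ℝ → ℝ)
    (hgp0 : ∀ t ≤ (1/2 : ℝ), gp t = 0)
    (hgpmem : ∀ t : ℝ, gp t ∈ Set.Ico (0:ℝ) 1)
    (hgpc : Continuous gp)
    (hgpode : ∀ t > (1/2 : ℝ),
      HasDerivAt gp (2 * p * gp t * (1 - gp t) / (1 - 2 * t * (1 - gp t))) t) :
    ∀ t > (1/2:ℝ), 1 - 2 * t * (1 - gp t) ≠ 0 := by
  set h : ℝ → ℝ := fun t => 1 - 2 * t * (1 - gp t) with hh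
  have hcont : Continuous h := by fun_prop
  intro t0 ht0 hcontra
  have hcontra : h t0 = 0 := hcontra
  have hgpos0 : 0 < gp t0 := by
    rcases lt_or_eq_of_le (hgpmem t0).1 with hg | hg
    · exact hg
    · exfalso
      have : h t0 = 1 - 2 * t0 := by simp only [hh, ← hg]; ring
      rw [hcontra] at this; linarith
  have hlt1 : gp t0 < 1 := (hgpmem t0).2
  have hG0 : (2 * p * gp t0 * (1 - gp t0) / (1 - 2 * t0 * (1 - gp t0))) = 0 := by
    rw [show (1 - 2 * t0 * (1 - gp t0)) = h t0 from rfl, hcontra, div_zero]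
  have hg' : HasDerivAt gp 0 t0 := hG0 ▸ hgpode t0 ht0
  have hd0 : HasDerivAt h (-((2*1)*(1 - gp t0) + (2*t0)*(0 - 0))) t0 :=
    (((hasDerivAt_id t0).const_mul 2).mul ((hasDerivAt_const t0 1).sub hg')).const_sub 1
  have hd0' : HasDerivAt h (-(2*(1 - gp t0))) t0 := by convert hd0 using 1; ring
  obtain ⟨ε, hε, hL, _⟩ := cross_neg hd0' (by linarith) hcontra
  set g0 := gp t0 with hg0
  set q := p * g0 * (1 - g0) with hq
  have hqpos : 0 < q := mul_pos (mul_pos hp0 hgpos0) (by linarith)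
  -- eventual bounds near t0
  have e1 : ∀ᶠ t in nhds t0, |h t| < q/8 :=
    (hcont.abs.continuousAt).eventually_lt_const
      (by show |h t0| < q/8; rw [show h t0 = (0:ℝ) from hcontra, abs_zero]; linarith)
  have e2 : ∀ᶠ t in nhds t0, g0/2 < gp t :=
    (hgpc.continuousAt).eventually_const_lt (by rw [← hg0]; linarith)
  have e3 : ∀ᶠ t in nhds t0, gp t < (1+g0)/2 :=
    (hgpc.continuousAt).eventually_lt_const (by rw [← hg0]; linarith)
  have e4 : ∀ᶠ t in nhds t0, (1/2:ℝ) < t := eventually_gt_nhds ht0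
  obtain ⟨δ0, hδ0, hball⟩ := Metric.eventually_nhds_iff.mp (e1.and (e2.and (e3.and e4)))
  set δ := min (δ0/2) (ε/2) with hδ
  have hδpos : 0 < δ := lt_min (by linarith) (by linarith)
  have hδδ0 : δ ≤ δ0/2 := min_le_left _ _
  have hδε : δ ≤ ε/2 := min_le_right _ _
  have hmem : ∀ s, t0 - δ ≤ s → s ≤ t0 →
      |h s| < q/8 ∧ g0/2 < gp s ∧ gp s < (1+g0)/2 ∧ (1/2:ℝ) < s := by
    intro s h1 h2
    exact hball (by rw [Real.dist_eq, abs_lt]; constructor <;> [linarith; linarith])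
  have hpos : ∀ s, t0 - δ ≤ s → s < t0 → 0 < h s := by
    intro s h1 h2
    exact hL s (by linarith) h2
  -- MVT on [t0 - δ, t0] for ψ = h²
  have hMVT := exists_hasDerivAt_eq_slope (fun t => h t ^ 2)
    (fun t => -4*(h t)*(1-gp t) + 8*p*t*(gp t)*(1-gp t))
    (show t0 - δ < t0 by linarith)
    (Continuous.continuousOn (by fun_prop))
    (by
      intro s hs
      obtain ⟨hs1, hs2⟩ := hs
      obtain ⟨hb1, hb2, hb3, hb4⟩ := hmem s (le_of_lt hs1) (le_of_lt hs2)
      have hhpos : 0 < h s := hpos s (le_of_lt hs1) hs2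
      have hG := hgpode s hb4
      have hrel : (2 * p * gp s * (1 - gp s) / (1 - 2 * s * (1 - gp s))) * h s
          = 2 * p * gp s * (1 - gp s) := div_mul_cancel₀ _ (ne_of_gt hhpos)
      have hder_h : HasDerivAt h (-((2*1)*(1 - gp s) + (2*s)*(0 -
          (2 * p * gp s * (1 - gp s) / (1 - 2 * s * (1 - gp s)))))) s :=
        (((hasDerivAt_id s).const_mul 2).mul ((hasDerivAt_const s 1).sub hG)).const_sub 1
      have hψ := hder_h.pow 2
      refine hψ.congr_deriv (Eq.symm ?_)
      rw [show (2:ℕ) - 1 = 1 from rfl, pow_one]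
      push_cast
      linear_combination (-4*s) * hrel
      )
  obtain ⟨c, hc, hceq⟩ := hMVT
  obtain ⟨hc1, hc2⟩ := hc
  obtain ⟨hb1, hb2, hb3, hb4⟩ := hmem c (le_of_lt hc1) (le_of_lt hc2)
  have hhposc : 0 < h c := hpos c (le_of_lt hc1) hc2
  have habs : h c < q/8 := lt_of_le_of_lt (le_abs_self _) hb1
  have hgc0 : 0 ≤ gp c := (hgpmem c).1
  have hgc1 : gp c < 1 := (hgpmem c).2
  -- lower bound for the derivative value at c
  have hlow : q/2 ≤ -4*(h c)*(1-gp c) + 8*p*c*(gp c)*(1-gp c) := by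
    have k1 : -4*(h c)*(1-gp c) ≥ -(q/2) := by
      nlinarith [mul_nonneg (by linarith : (0:ℝ) ≤ 4 * h c) hgc0]
    have k2 : q ≤ 8*p*c*(gp c)*(1-gp c) := by
      have B : (1-g0)/2 ≤ 1 - gp c := by linarith
      have C : p * (g0/2) ≤ p * gp c := mul_le_mul_of_nonneg_left (le_of_lt hb2) hp0.le
      have D : (p * (g0/2)) * ((1-g0)/2) ≤ (p * gp c) * (1 - gp c) :=
        mul_le_mul C B (by linarith) (mul_nonneg hp0.le hgc0)
      have E : 0 ≤ p * gp c * (1 - gp c) :=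
        mul_nonneg (mul_nonneg hp0.le hgc0) (by linarith)
      have F : 0 ≤ (8*c - 4) * (p * gp c * (1 - gp c)) := mul_nonneg (by linarith) E
      nlinarith [D, F]
    linarith
  -- upper bound: slope is nonpositive
  have hup : (h t0 ^ 2 - h (t0 - δ) ^ 2) / (t0 - (t0 - δ)) ≤ 0 := by
    rw [show h t0 = (0:ℝ) from hcontra]
    apply div_nonpos_of_nonpos_of_nonneg
    · nlinarith [sq_nonneg (h (t0 - δ))]
    · linarith
  have hceq' : -4*(h c)*(1-gp c) + 8*p*c*(gp c)*(1-gp c)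
      = (h t0 ^ 2 - h (t0 - δ) ^ 2) / (t0 - (t0 - δ)) := hceq
  rw [hceq'] at hlow
  linarith


lemma core_deriv (p : ℝ) (gp : ℝ → ℝ) (k : ℕ) (hk : 1 ≤ k) (t G : ℝ)
    (hg : HasDerivAt gp G t)
    (hrel : G * (1 - 2*t*(1-gp t)) = 2*p*(gp t)*(1-gp t)) :
    HasDerivAt (fun s => ((k:ℝ)^((k:ℤ)-2)/(Nat.factorial k : ℝ)) * (2*s)^(k-1) * (1-gp s)^k *
        Real.exp (-(2*k*s*(1-gp s))))
      (((k:ℝ)^((k:ℤ)-2)/(Nat.factorial k : ℝ)) * (2*(k:ℝ)-2) * (2*t)^(k-2) * (1-gp t)^k *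
          Real.exp (-(2*k*t*(1-gp t)))
        - 2*(k:ℝ)*(((k:ℝ)^((k:ℤ)-2)/(Nat.factorial k : ℝ)) * (2*t)^(k-1) * (1-gp t)^k *
          Real.exp (-(2*k*t*(1-gp t))))*(1-(1-p)*gp t)) t := by
  have h1 : HasDerivAt (fun s : ℝ => ((k:ℝ)^((k:ℤ)-2)/(Nat.factorial k : ℝ)) * (2*s)^(k-1))
      (((k:ℝ)^((k:ℤ)-2)/(Nat.factorial k : ℝ)) * (((k-1:ℕ):ℝ) * (2*t)^(k-1-1) * (2*1))) t :=
    (((hasDerivAt_id t).const_mul 2).pow (k-1)).const_mul _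
  have h2 : HasDerivAt (fun s : ℝ => (1-gp s)^k)
      (((k:ℕ):ℝ) * (1-gp t)^(k-1) * (0 - G)) t :=
    ((hasDerivAt_const t 1).sub hg).pow k
  have h3 : HasDerivAt (fun s : ℝ => -(2*(k:ℝ)*s*(1-gp s)))
      (-((2*(k:ℝ)*1)*(1-gp t) + (2*(k:ℝ)*t)*(0 - G))) t :=
    (((hasDerivAt_id t).const_mul (2*(k:ℝ))).mul ((hasDerivAt_const t 1).sub hg)).neg
  have hexp := h3.exp
  have total := (h1.mul h2).mul hexp
  refine total.congr_deriv (Eq.symm ?_)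
  simp only [Pi.mul_apply]
  rcases k with _ | k
  · omega
  rcases k with _ | j
  · -- k = 1
    simp only [Nat.factorial_one, Nat.cast_one, zero_add, one_zpow]
    norm_num
    linear_combination (Real.exp (-(2*t*(1-gp t)))) * hrel
  · -- k = j+2
    simp only [show j+1+1-1 = j+1 from by omega, show (j+1)-1 = j from by omega,
      show j+1+1-2 = j from by omega]
    push_cast
    linear_combination ((2*t*((j:ℝ)+1+1)) * (((j:ℝ)+1+1)^((j:ℤ)+1+1-2)/(Nat.factorial (j+1+1) : ℝ)) *
      (2*t)^j * (1-gp t)^(j+1) * Real.exp (-(2*((j:ℝ)+1+1)*t*(1-gp t)))) * hrel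

lemma zpow_aux (j : ℕ) (hj : 1 ≤ j) : (j:ℝ) * (j:ℝ)^((j:ℤ)-2) = (j:ℝ)^(j-1:ℕ) := by
  have h0 : (j:ℝ) ≠ 0 := Nat.cast_ne_zero.mpr (by omega)
  calc (j:ℝ) * (j:ℝ)^((j:ℤ)-2) = (j:ℝ)^(1:ℤ) * (j:ℝ)^((j:ℤ)-2) := by rw [zpow_one]
    _ = (j:ℝ)^(1 + ((j:ℤ)-2)) := (zpow_add₀ h0 _ _).symm
    _ = (j:ℝ)^(((j-1:ℕ):ℤ)) := by congr 1; push_cast [Nat.cast_sub hj]; ring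
    _ = (j:ℝ)^(j-1:ℕ) := zpow_natCast _ _

end AuxTree

/-- For `p ∈ (0,1]`, with `g_p` the gel mass function (zero on `(-∞,1/2]`,
valued in `[0,1)`, continuous, satisfying the ODE
`g_p' = 2p g_p(1-g_p)/(1-2t(1-g_p))` on `(1/2,∞)`), the functions
`t_{p,k}(t) = (k^{k-2}/k!)(2t)^{k-1}(1-g_p(t))^k e^{-2kt(1-g_p(t))}` satisfy:
`t_{p,1}(0)=1`, `t_{p,k}(0)=0` for `k ≥ 2`,
`t_{p,1}' = -2 t_{p,1} (1-(1-p)g_p)` on `[0,∞)`, and for `k ≥ 2`,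
`t_{p,k}' = Σ_{i+j=k} i j t_{p,i} t_{p,j} - 2k t_{p,k}(1-(1-p)g_p)` on `[0,∞)`. -/
theorem tree_functions_ODE (p : ℝ) (hp : p ∈ Set.Ioc (0:ℝ) 1)
    (gp : ℝ → ℝ)
    (hgp0 : ∀ t ≤ (1/2 : ℝ), gp t = 0)
    (hgpmem : ∀ t : ℝ, gp t ∈ Set.Ico (0:ℝ) 1)
    (hgpc : Continuous gp)
    (hgpode : ∀ t > (1/2 : ℝ),
      HasDerivAt gp (2 * p * gp t * (1 - gp t) / (1 - 2 * t * (1 - gp t))) t)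
    (tk : ℕ → ℝ → ℝ)
    (htk : tk = fun (k : ℕ) (t : ℝ) => ((k : ℝ) ^ ((k : ℤ) - 2) / (Nat.factorial k : ℝ)) *
      (2 * t) ^ (k - 1) * (1 - gp t) ^ k * Real.exp (-(2 * k * t * (1 - gp t)))) :
    tk 1 0 = 1 ∧ (∀ k ≥ 2, tk k 0 = 0) ∧
    (∀ t ≥ (0:ℝ), HasDerivAt (tk 1) (-(2 * tk 1 t * (1 - (1 - p) * gp t))) t) ∧
    (∀ k ≥ 2, ∀ t ≥ (0:ℝ),
      HasDerivAt (tk k)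
        ((∑ i ∈ Finset.Icc 1 (k - 1), (i : ℝ) * ((k - i : ℕ) : ℝ) * tk i t * tk (k - i) t)
          - 2 * k * tk k t * (1 - (1 - p) * gp t)) t) := by
  obtain ⟨hp0, hp1⟩ := hp
  subst htk
  have hg00 : gp 0 = 0 := hgp0 0 (by norm_num)
  have hdenom : ∀ t > (1/2:ℝ), 1 - 2*t*(1-gp t) ≠ 0 :=
    denom_ne p hp0 gp hgp0 hgpmem hgpc hgpode
  have hglt : ∀ y : ℝ, y < 1/2 → HasDerivAt gp 0 y := by
    intro y hy
    have hev : gp =ᶠ[nhds y] (fun _ => (0:ℝ)) := by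
      filter_upwards [Iio_mem_nhds hy] with z hz
      exact hgp0 z hz.le
    exact (hasDerivAt_const y (0:ℝ)).congr_of_eventuallyEq hev
  have hDer : ∀ k : ℕ, 1 ≤ k → ∀ t : ℝ, HasDerivAt
      (fun s => ((k:ℝ)^((k:ℤ)-2)/(Nat.factorial k:ℝ)) * (2*s)^(k-1) * (1-gp s)^k *
        Real.exp (-(2*(k:ℝ)*s*(1-gp s))))
      (((k:ℝ)^((k:ℤ)-2)/(Nat.factorial k : ℝ)) * (2*(k:ℝ)-2) * (2*t)^(k-2) * (1-gp t)^k *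
          Real.exp (-(2*(k:ℝ)*t*(1-gp t)))
        - 2*(k:ℝ)*(((k:ℝ)^((k:ℤ)-2)/(Nat.factorial k : ℝ)) * (2*t)^(k-1) * (1-gp t)^k *
          Real.exp (-(2*(k:ℝ)*t*(1-gp t))))*(1-(1-p)*gp t)) t := by
    intro k hk
    apply hasDerivAt_of_hasDerivAt_of_ne' (x := (1/2:ℝ))
    · intro y hy
      rcases lt_or_gt_of_ne hy with h | h
      · exact core_deriv p gp k hk y 0 (hglt y h) (by rw [hgp0 y h.le]; ring)
      · exact core_deriv p gp k hk y _ (hgpode y h) (div_mul_cancel₀ _ (hdenom y h))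
    · exact Continuous.continuousAt (by fun_prop)
    · exact Continuous.continuousAt (by fun_prop)
  refine ⟨?_, ?_, ?_, ?_⟩
  · show ((1:ℕ):ℝ)^(((1:ℕ):ℤ)-2)/((Nat.factorial 1 : ℕ):ℝ) * (2*(0:ℝ))^(1-1) * (1-gp 0)^1 *
      Real.exp (-(2*((1:ℕ):ℝ)*0*(1-gp 0))) = 1
    rw [hg00]
    norm_num
  · intro k hk
    show ((k:ℕ):ℝ)^(((k:ℕ):ℤ)-2)/((Nat.factorial k : ℕ):ℝ) * (2*(0:ℝ))^(k-1) * (1-gp 0)^k *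
      Real.exp (-(2*((k:ℕ):ℝ)*0*(1-gp 0))) = 0
    rw [show (2*(0:ℝ)) = 0 by ring, zero_pow (show k-1 ≠ 0 by omega)]
    ring
  · intro t _
    convert hDer 1 le_rfl t using 1
    show -(2 * (((1:ℕ):ℝ)^(((1:ℕ):ℤ)-2)/((Nat.factorial 1 : ℕ):ℝ) * (2*t)^(1-1) * (1-gp t)^1 *
        Real.exp (-(2*((1:ℕ):ℝ)*t*(1-gp t)))) * (1-(1-p)*gp t)) = _
    norm_num
  · intro k hk t _
    convert hDer k (by omega) t using 1
    have hsum : (∑ i ∈ Finset.Icc 1 (k - 1), (i : ℝ) * ((k - i : ℕ) : ℝ) *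
        (((i:ℕ):ℝ)^(((i:ℕ):ℤ)-2)/((Nat.factorial i : ℕ):ℝ) * (2*t)^(i-1) * (1-gp t)^i *
          Real.exp (-(2*((i:ℕ):ℝ)*t*(1-gp t)))) *
        ((((k-i:ℕ)):ℝ)^((((k-i:ℕ)):ℤ)-2)/((Nat.factorial (k-i) : ℕ):ℝ) * (2*t)^(k-i-1) * (1-gp t)^(k-i) *
          Real.exp (-(2*(((k-i:ℕ)):ℝ)*t*(1-gp t)))))
        = ((k:ℝ)^((k:ℤ)-2)/(Nat.factorial k : ℝ)) * (2*(k:ℝ)-2) * (2*t)^(k-2) * (1-gp t)^k *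
          Real.exp (-(2*k*t*(1-gp t))) := by
      have key : ∀ i ∈ Finset.Icc 1 (k-1), (i : ℝ) * ((k - i : ℕ) : ℝ) *
          (((i:ℕ):ℝ)^(((i:ℕ):ℤ)-2)/((Nat.factorial i : ℕ):ℝ) * (2*t)^(i-1) * (1-gp t)^i *
            Real.exp (-(2*((i:ℕ):ℝ)*t*(1-gp t)))) *
          ((((k-i:ℕ)):ℝ)^((((k-i:ℕ)):ℤ)-2)/((Nat.factorial (k-i) : ℕ):ℝ) * (2*t)^(k-i-1) * (1-gp t)^(k-i) *
            Real.exp (-(2*(((k-i:ℕ)):ℝ)*t*(1-gp t))))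
          = ((k.choose i : ℝ) * (i:ℝ)^(i-1:ℕ) * (((k-i:ℕ)):ℝ)^(k-i-1:ℕ)) *
            ((2*t)^(k-2) * (1-gp t)^k * Real.exp (-(2*(k:ℝ)*t*(1-gp t))) / (Nat.factorial k : ℝ)) := by
        intro i hi
        obtain ⟨h1i, h2i⟩ := Finset.mem_Icc.mp hi
        have hik : i ≤ k := by omega
        have hE : Real.exp (-(2*((i:ℕ):ℝ)*t*(1-gp t))) * Real.exp (-(2*(((k-i:ℕ)):ℝ)*t*(1-gp t)))
            = Real.exp (-(2*(k:ℝ)*t*(1-gp t))) := by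
          rw [← Real.exp_add]
          congr 1
          push_cast [Nat.cast_sub hik]
          ring
        have hpow1 : (2*t)^(i-1) * (2*t)^(k-i-1) = (2*t)^(k-2) := by
          rw [← pow_add]; congr 1; omega
        have hpow2 : (1-gp t)^i * (1-gp t)^(k-i) = (1-gp t)^k := by
          rw [← pow_add]; congr 1; omega
        have hzi : (i:ℝ) * (i:ℝ)^((i:ℤ)-2) = (i:ℝ)^(i-1:ℕ) := zpow_aux i h1i
        have hzk : ((k-i:ℕ):ℝ) * ((k-i:ℕ):ℝ)^(((k-i:ℕ):ℤ)-2) = ((k-i:ℕ):ℝ)^(k-i-1:ℕ) :=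
          zpow_aux (k-i) (by omega)
        have hfact : (Nat.factorial k : ℝ)
            = (k.choose i : ℝ) * (Nat.factorial i : ℝ) * (Nat.factorial (k-i) : ℝ) := by
          exact_mod_cast congrArg (Nat.cast (R := ℝ))
            (Nat.choose_mul_factorial_mul_factorial hik).symm
        have hfi : (Nat.factorial i : ℝ) ≠ 0 := Nat.cast_ne_zero.mpr (Nat.factorial_ne_zero i)
        have hfki : (Nat.factorial (k-i) : ℝ) ≠ 0 := Nat.cast_ne_zero.mpr (Nat.factorial_ne_zero _)
        have hch : (k.choose i : ℝ) ≠ 0 := Nat.cast_ne_zero.mpr ((Nat.choose_pos hik).ne')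
        calc (i : ℝ) * ((k - i : ℕ) : ℝ) *
            (((i:ℕ):ℝ)^(((i:ℕ):ℤ)-2)/((Nat.factorial i : ℕ):ℝ) * (2*t)^(i-1) * (1-gp t)^i *
              Real.exp (-(2*((i:ℕ):ℝ)*t*(1-gp t)))) *
            ((((k-i:ℕ)):ℝ)^((((k-i:ℕ)):ℤ)-2)/((Nat.factorial (k-i) : ℕ):ℝ) * (2*t)^(k-i-1) * (1-gp t)^(k-i) *
              Real.exp (-(2*(((k-i:ℕ)):ℝ)*t*(1-gp t))))
            = ((i:ℝ) * (i:ℝ)^((i:ℤ)-2)) * (((k-i:ℕ):ℝ) * ((k-i:ℕ):ℝ)^(((k-i:ℕ):ℤ)-2)) *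
              ((2*t)^(i-1) * (2*t)^(k-i-1)) * ((1-gp t)^i * (1-gp t)^(k-i)) *
              (Real.exp (-(2*((i:ℕ):ℝ)*t*(1-gp t))) * Real.exp (-(2*(((k-i:ℕ)):ℝ)*t*(1-gp t)))) /
              ((Nat.factorial i : ℝ) * (Nat.factorial (k-i) : ℝ)) := by ring
          _ = (i:ℝ)^(i-1:ℕ) * ((k-i:ℕ):ℝ)^(k-i-1:ℕ) * (2*t)^(k-2) * (1-gp t)^k *
              Real.exp (-(2*(k:ℝ)*t*(1-gp t))) / ((Nat.factorial i : ℝ) * (Nat.factorial (k-i) : ℝ)) := by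
            rw [hzi, hzk, hpow1, hpow2, hE]
          _ = ((k.choose i : ℝ) * (i:ℝ)^(i-1:ℕ) * (((k-i:ℕ)):ℝ)^(k-i-1:ℕ)) *
              ((2*t)^(k-2) * (1-gp t)^k * Real.exp (-(2*(k:ℝ)*t*(1-gp t))) / (Nat.factorial k : ℝ)) := by
            rw [hfact]
            field_simp
      rw [Finset.sum_congr rfl key, ← Finset.sum_mul]
      have hab := abelS (k-1)
      rw [show k-1+1 = k from by omega] at hab
      rw [hab]
      have hzpk : ((k:ℝ))^((k:ℤ)-2) = (k:ℝ)^((k-2:ℕ)) := by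
        rw [← zpow_natCast]
        congr 1
        push_cast [Nat.cast_sub (show 2 ≤ k from hk)]
        ring
      rw [hzpk, show k-1-1 = k-2 from by omega]
      have hcast : ((k-1:ℕ):ℝ) = (k:ℝ) - 1 := by
        push_cast [Nat.cast_sub (show 1 ≤ k from by omega)]
        ring
      rw [hcast]
      ring
    rw [hsum]
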